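/- Let R be a commutative ring and f(X), g(X) polynomials in R[X] such that the leading coefficient of f is a unit in R. Then the cokernel of the Sylvester matrix of f and g (as an R-linear map R[X]_{<deg g} ⊕ R[X]_{<deg f} → R[X]_{<deg f + deg g}, (a,b) ↦ af + bg) is isomorphic, as an R-module, to the cokernel of the map given by multiplication by g on the quotient ring R[X]/(f(X)). -/

import Mathlib

open Polynomial

/-- If the leading coefficient of `f` is a unit, the cokernel of the Sylvester map of `f` and
`g` (sending `(a, b)` with `deg a < deg g`, `deg b < deg f` to `a * f + b * g`) is isomorphic,
as an `R`-module, to the cokernel of multiplication by `g` on `R[X] ⧸ (f)`. -/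
theorem sylvester_coker_iso_mulByG_coker
    (R : Type*) [CommRing R] (f g : R[X]) (hf : IsUnit f.leadingCoeff)
    (syl : (↥(degreeLT R g.natDegree) × ↥(degreeLT R f.natDegree)) →ₗ[R]
      ↥(degreeLT R (f.natDegree + g.natDegree)))
    (hsyl : ∀ ab : ↥(degreeLT R g.natDegree) × ↥(degreeLT R f.natDegree),
      ((syl ab : R[X])) = (ab.1 : R[X]) * f + (ab.2 : R[X]) * g)
    (mulg : (R[X] ⧸ Ideal.span {f}) →ₗ[R] (R[X] ⧸ Ideal.span {f}))
    (hmulg : ∀ x : R[X],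
      mulg (Ideal.Quotient.mk (Ideal.span {f}) x) = Ideal.Quotient.mk (Ideal.span {f}) (g * x)) :
    Nonempty ((↥(degreeLT R (f.natDegree + g.natDegree)) ⧸ LinearMap.range syl) ≃ₗ[R]
      ((R[X] ⧸ Ideal.span {f}) ⧸ LinearMap.range mulg)) := by
  rcases subsingleton_or_nontrivial R with hsub | hnt
  · have hpoly : Subsingleton R[X] := inferInstance
    haveI h0 : Subsingleton (R[X] ⧸ Ideal.span ({f} : Set R[X])) :=
      Quotient.instSubsingletonQuotient _
    haveI h1 : Subsingleton (↥(degreeLT R (f.natDegree + g.natDegree)) ⧸ LinearMap.range syl) :=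
      Quotient.instSubsingletonQuotient _
    haveI h2 : Subsingleton ((R[X] ⧸ Ideal.span ({f} : Set R[X])) ⧸ LinearMap.range mulg) :=
      Quotient.instSubsingletonQuotient _
    exact ⟨{ toFun := 0, invFun := 0, map_add' := by intros; simp,
             map_smul' := by intros; simp,
             left_inv := fun x => Subsingleton.elim _ _,
             right_inv := fun x => Subsingleton.elim _ _ }⟩
  obtain ⟨u, hu⟩ := hf
  set h : R[X] := f * C (↑u⁻¹ : R) with hh
  have hinv : f.leadingCoeff * (↑u⁻¹ : R) = 1 := by
    rw [← hu]; exact u.mul_inv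
  have hmonic : h.Monic := by
    have : h.leadingCoeff = 1 := by
      rw [hh, leadingCoeff_mul' (by rw [leadingCoeff_C, hinv]; exact one_ne_zero),
        leadingCoeff_C, hinv]
    exact this
  have hfh : f = h * C (↑u : R) := by
    rw [hh, mul_assoc, ← C_mul, Units.inv_mul, C_1, mul_one]
  have hspan : Ideal.span ({h} : Set R[X]) = Ideal.span ({f} : Set R[X]) := by
    apply le_antisymm
    · exact Ideal.span_singleton_le_span_singleton.2 ⟨C (↑u⁻¹ : R), hh⟩
    · exact Ideal.span_singleton_le_span_singleton.2 ⟨C (↑u : R), hfh⟩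
  have hdegh : h.degree = f.degree := by
    rw [hh, degree_mul' (by rw [leadingCoeff_C, hinv]; exact one_ne_zero),
      degree_C (by exact u⁻¹.ne_zero), add_zero]
  have hf0 : f ≠ 0 := fun h0 => u.ne_zero (by rw [hu, h0, leadingCoeff_zero])
  have hdegf : f.degree = (f.natDegree : WithBot ℕ) := degree_eq_natDegree hf0
  -- the map φ
  let φ : ↥(degreeLT R (f.natDegree + g.natDegree)) →ₗ[R] (R[X] ⧸ Ideal.span ({f} : Set R[X])) :=
    (Ideal.Quotient.mkₐ R _).toLinearMap ∘ₗ (degreeLT R (f.natDegree + g.natDegree)).subtype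
  have hφ : ∀ p : ↥(degreeLT R (f.natDegree + g.natDegree)),
      φ p = Ideal.Quotient.mk (Ideal.span ({f} : Set R[X])) (p : R[X]) := fun p => rfl
  have hcond : LinearMap.range syl ≤ (LinearMap.range mulg).comap φ := by
    rintro _ ⟨ab, rfl⟩
    simp only [Submodule.mem_comap, hφ, hsyl, LinearMap.mem_range, map_add]
    refine ⟨Ideal.Quotient.mk _ (ab.2 : R[X]), ?_⟩
    rw [hmulg]
    have : Ideal.Quotient.mk (Ideal.span ({f} : Set R[X])) ((ab.1 : R[X]) * f) = 0 := by
      rw [Ideal.Quotient.eq_zero_iff_mem]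
      exact Ideal.mem_span_singleton.2 (dvd_mul_left f _)
    rw [this, zero_add, mul_comm]
  let ψ := Submodule.mapQ (LinearMap.range syl) (LinearMap.range mulg) φ hcond
  have hbij : Function.Bijective ψ := by
    constructor
    · -- injective
      rw [← LinearMap.ker_eq_bot, LinearMap.ker_eq_bot']
      intro m hm
      obtain ⟨p, rfl⟩ := Submodule.Quotient.mk_surjective _ m
      rw [Submodule.mapQ_apply, Submodule.Quotient.mk_eq_zero] at hm
      obtain ⟨y, hy⟩ := hm
      obtain ⟨x, rfl⟩ := Ideal.Quotient.mk_surjective y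
      rw [hmulg, hφ] at hy
      have hdvd : h ∣ ((p : R[X]) - g * x) := by
        rw [← Ideal.mem_span_singleton, hspan]
        exact Ideal.Quotient.eq.1 hy.symm
      obtain ⟨c, hc⟩ := hdvd
      set r : R[X] := x %ₘ h with hr
      have hxr : x = h * (x /ₘ h) + r := by
        rw [hr, modByMonic_eq_sub_mul_div x h]; ring
      have hpeq : (p : R[X]) = (C (↑u⁻¹ : R) * (c + g * (x /ₘ h))) * f + r * g := by
        have hp1 : (p : R[X]) = h * c + g * x := by rw [← hc]; ring
        linear_combination hp1 + g * hxr + (c + g * (x /ₘ h)) * hh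
      -- degree bounds
      have hrlt : r.degree < (f.natDegree : WithBot ℕ) := by
        rw [← hdegf, ← hdegh]; exact degree_modByMonic_lt x hmonic
      have hrg : (r * g).degree < ((f.natDegree + g.natDegree : ℕ) : WithBot ℕ) := by
        calc (r * g).degree ≤ r.degree + g.degree := degree_mul_le _ _
          _ < (f.natDegree : WithBot ℕ) + (g.natDegree : WithBot ℕ) := by
              rcases eq_or_ne g 0 with hg0 | hg0
              · simp only [hg0, degree_zero, WithBot.add_bot]
                exact bot_lt_iff_ne_bot.2 (by simp)
              · exact WithBot.add_lt_add_of_lt_of_le (by simpa using hg0) hrlt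
                  degree_le_natDegree
          _ = ((f.natDegree + g.natDegree : ℕ) : WithBot ℕ) := by push_cast; rfl
      set a : R[X] := C (↑u⁻¹ : R) * (c + g * (x /ₘ h)) with ha
      have hplt : (p : R[X]).degree < ((f.natDegree + g.natDegree : ℕ) : WithBot ℕ) :=
        mem_degreeLT.1 p.2
      have haf : (a * f).degree < ((f.natDegree + g.natDegree : ℕ) : WithBot ℕ) := by
        have heq : a * f = (p : R[X]) - r * g := by rw [hpeq]; ring
        rw [heq]
        exact lt_of_le_of_lt (degree_sub_le _ _) (max_lt hplt hrg)
      have halt : a.degree < (g.natDegree : WithBot ℕ) := by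
        rcases eq_or_ne a 0 with ha0 | ha0
        · rw [ha0, degree_zero]; exact_mod_cast WithBot.bot_lt_coe _
        · have hne : a.leadingCoeff * f.leadingCoeff ≠ 0 := by
            intro hz
            have hla : a.leadingCoeff = 0 := by
              have h2 := congrArg (· * (↑u⁻¹ : R)) hz
              simpa [mul_assoc, hinv] using h2
            exact ha0 (leadingCoeff_eq_zero.1 hla)
          rw [degree_mul' hne, hdegf] at haf
          rw [show ((f.natDegree + g.natDegree : ℕ) : WithBot ℕ)
              = (g.natDegree : WithBot ℕ) + (f.natDegree : WithBot ℕ) by push_cast; ring] at haf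
          exact (WithBot.add_lt_add_iff_right (by exact WithBot.coe_ne_bot)).1 haf
      rw [Submodule.Quotient.mk_eq_zero]
      refine ⟨(⟨a, mem_degreeLT.2 halt⟩, ⟨r, mem_degreeLT.2 hrlt⟩), ?_⟩
      apply Subtype.ext
      rw [hsyl]
      exact hpeq.symm
    · -- surjective
      intro z
      obtain ⟨y, rfl⟩ := Submodule.Quotient.mk_surjective _ z
      obtain ⟨x, rfl⟩ := Ideal.Quotient.mk_surjective y
      set r : R[X] := x %ₘ h with hr
      have hrlt : r.degree < ((f.natDegree + g.natDegree : ℕ) : WithBot ℕ) := by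
        have h1 : r.degree < f.degree := hdegh ▸ degree_modByMonic_lt x hmonic
        rw [hdegf] at h1
        exact lt_of_lt_of_le h1 (by exact_mod_cast Nat.le_add_right _ _)
      refine ⟨Submodule.Quotient.mk ⟨r, mem_degreeLT.2 hrlt⟩, ?_⟩
      rw [Submodule.mapQ_apply, hφ]
      congr 1
      apply Ideal.Quotient.eq.2
      rw [← hspan]
      apply Ideal.mem_span_singleton.2
      refine ⟨-(x /ₘ h), ?_⟩
      have hgoal : (x %ₘ h) - x = h * -(x /ₘ h) := by
        rw [modByMonic_eq_sub_mul_div x h]; ring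
      exact hgoal
  exact ⟨LinearEquiv.ofBijective ψ hbij⟩
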